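/- (Bootstrapped deviation bound from tail estimate) Suppose M_n satisfies: there exist c > 0 with P(M_{m} ≥ m_{m} + y) ≥ c(1+y)e^{−y} for all m ≥ 1 and y ∈ [0, m^{1/2}], and suppose there exist a > 0, ρ > 1 such that a.s. on S, #{|u|=k : V(u) ≥ −ka} ≥ ρ^k for all large k. Then for every k ≥ 1 and y ≥ 0, P(M_n ≤ m_n − y) ≤ P(#{|u|=k : V(u) ≥ −ka} < ρ^k) + (1 − c(ka − y)_+ e^{−ka})^{ρ^k}, where m_n = −(3/2) log n, and consequently limsup_{n→∞} P(M_n ≤ m_n − y, S) → 0 along y = ka − 1, k → ∞. -/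

import Mathlib

open MeasureTheory ProbabilityTheory Real Filter
open scoped Classical ENNReal

/-- A branching random walk: the offspring point processes `(N u, (L u i)_i)` (number of
children and relative displacements of the children) indexed by Ulam–Harris words `u` are
i.i.d. -/
structure BRW (Ω : Type) [MeasurableSpace Ω] where
  μ : Measure Ω
  prob : IsProbabilityMeasure μ
  N : List ℕ → Ω → ℕ
  L : List ℕ → ℕ → Ω → ℝ
  meas_N : ∀ u, Measurable (N u)
  meas_L : ∀ u i, Measurable (L u i)
  ident : ∀ u v : List ℕ,
    Measure.map (fun ω => (N u ω, fun i => L u i ω)) μ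
      = Measure.map (fun ω => (N v ω, fun i => L v i ω)) μ
  indep : iIndepFun
    (fun u ω => (N u ω, fun i => L u i ω)) μ

attribute [instance] BRW.prob

variable {Ω : Type} [MeasurableSpace Ω]

/-- The set of particles alive at generation `n` (Ulam–Harris labels). -/
def BRW.gen (B : BRW Ω) : ℕ → Ω → Finset (List ℕ)
  | 0, _ => {[]}
  | n+1, ω => (B.gen n ω).biUnion fun u => (Finset.range (B.N u ω)).image fun i => u ++ [i]

/-- The position `V(u)` of the particle `u`. -/
def BRW.pos (B : BRW Ω) (u : List ℕ) (ω : Ω) : ℝ :=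
  ∑ j ∈ Finset.range u.length, B.L (u.take j) (u.getD j 0) ω

/-- Supercriticality: `E[∑_{|u|=1} 1] > 1`. -/
def BRW.supercritical (B : BRW Ω) : Prop :=
  1 < ∫⁻ ω, ((B.gen 1 ω).card : ℝ≥0∞) ∂B.μ

/-- The boundary case: `E[∑ e^{V(u)}] = 1`, `E[∑ V(u)e^{V(u)}] = 0`,
`E[∑ V(u)² e^{V(u)}] < ∞`. -/
def BRW.boundary (B : BRW Ω) : Prop :=
  (∫⁻ ω, ∑ u ∈ B.gen 1 ω, ENNReal.ofReal (Real.exp (B.pos u ω)) ∂B.μ = 1) ∧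
  Integrable (fun ω => ∑ u ∈ B.gen 1 ω, B.pos u ω * Real.exp (B.pos u ω)) B.μ ∧
  (∫ ω, ∑ u ∈ B.gen 1 ω, B.pos u ω *  Real.exp (B.pos u ω) ∂B.μ = 0) ∧
  (∫⁻ ω, ∑ u ∈ B.gen 1 ω, ENNReal.ofReal ((B.pos u ω) ^ 2 * Real.exp (B.pos u ω)) ∂B.μ < ⊤)

/-- Integrability condition (1.3): `E[∑ e^{V(u)} (log₊ ∑ (1+V(v)₊)e^{V(v)})²] < ∞`. -/
def BRW.spineCond (B : BRW Ω) : Prop :=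
  ∫⁻ ω, ENNReal.ofReal ((∑ u ∈ B.gen 1 ω, Real.exp (B.pos u ω)) *
    (max (Real.log (∑ v ∈ B.gen 1 ω, (1 + max (B.pos v ω) 0) * Real.exp (B.pos v ω))) 0) ^ 2)
      ∂B.μ < ⊤

/-- The survival event `S = {#T = ∞}`. -/
def BRW.survival (B : BRW Ω) : Set Ω := {ω | ∀ n, (B.gen n ω).Nonempty}

/-- The bent curve `f_n(k) = (3/2) log((n-k+1)/(n+1))`. -/
noncomputable def fcurve (n k : ℕ) : ℝ := (3 / 2) * Real.log (((n : ℝ) - k + 1) / (n + 1))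

/-- `m_n = -(3/2) log n`. -/
noncomputable def mshift (n : ℕ) : ℝ := -(3 / 2) * Real.log n

noncomputable section

namespace BRWproof

open MeasureTheory ProbabilityTheory Real Filter
open scoped Classical ENNReal

variable {Ω : Type} [MeasurableSpace Ω]

/-! ### Basic combinatorics of `gen` -/

abbrev E : Type := ℕ × (ℕ → ℝ)

def F (B : BRW Ω) (u : List ℕ) : Ω → E := fun ω => (B.N u ω, fun i => B.L u i ω)

lemma measurable_F (B : BRW Ω) (u : List ℕ) : Measurable (F B u) :=
  (B.meas_N u).prodMk (measurable_pi_lambda _ fun i => B.meas_L u i)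

lemma length_of_mem_gen (B : BRW Ω) :
    ∀ {n : ℕ} {u : List ℕ} {ω : Ω}, u ∈ B.gen n ω → u.length = n := by
  intro n
  induction n with
  | zero => intro u ω h; simp only [BRW.gen, Finset.mem_singleton] at h; simp [h]
  | succ n ih =>
    intro u ω h
    simp only [BRW.gen, Finset.mem_biUnion, Finset.mem_image, Finset.mem_range] at h
    obtain ⟨w, hw, i, hi, rfl⟩ := h
    simp [ih hw]

lemma mem_gen_iff (B : BRW Ω) {n : ℕ} {u : List ℕ} {ω : Ω} :
    u ∈ B.gen n ω ↔ u.length = n ∧ ∀ j < n, u.getD j 0 < B.N (u.take j) ω := by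
  induction n generalizing u with
  | zero =>
    constructor
    · intro h
      have hu : u = [] := by simpa [BRW.gen] using h
      subst hu; simp
    · rintro ⟨h, -⟩
      have hu : u = [] := List.length_eq_zero_iff.mp h
      subst hu; simp [BRW.gen]
  | succ n ih =>
    constructor
    · intro h
      simp only [BRW.gen, Finset.mem_biUnion, Finset.mem_image, Finset.mem_range] at h
      obtain ⟨w, hw, i, hi, rfl⟩ := h
      obtain ⟨hwl, hwc⟩ := ih.mp hw
      refine ⟨by simp [hwl], ?_⟩
      intro j hj
      rcases lt_or_eq_of_le (Nat.lt_succ_iff.mp hj) with hj' | hj'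
      · rw [List.take_append_of_le_length (by omega), List.getD_append _ _ _ _ (by omega)]
        exact hwc j hj'
      · subst hj'
        rw [List.take_append_of_le_length (by omega), List.getD_append_right _ _ _ _ (by omega),
          List.take_of_length_le (by omega)]
        simpa [hwl] using hi
    · rintro ⟨hl, hc⟩
      have hn : n < u.length := by omega
      have hdrop : u.drop n = [u.getD n 0] := by
        rw [List.drop_eq_getElem_cons hn]
        have h2 : u.drop (n + 1) = [] := List.drop_eq_nil_of_le (by omega)
        rw [h2, List.getD_eq_getElem u 0 hn]
      have hu : u.take n ++ [u.getD n 0] = u := by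
        conv_rhs => rw [← List.take_append_drop n u]
        rw [hdrop]
      simp only [BRW.gen, Finset.mem_biUnion, Finset.mem_image, Finset.mem_range]
      refine ⟨u.take n, ih.mpr ⟨by simp [List.length_take]; omega, ?_⟩,
        u.getD n 0, hc n (Nat.lt_succ_self n), hu⟩
      intro j hj
      have h1 : (u.take n).take j = u.take j := by
        rw [List.take_take]; congr 1; omega
      have h2 : (u.take n).getD j 0 = u.getD j 0 := by
        rw [List.getD_eq_getElem _ 0 (by simp [List.length_take]; omega),
          List.getD_eq_getElem _ 0 (by omega)]
        simp [List.getElem_take]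
      rw [h1, h2]
      exact hc j (by omega)

def tpos (B : BRW Ω) (u v : List ℕ) (ω : Ω) : ℝ :=
  ∑ j ∈ Finset.range v.length, B.L (u ++ v.take j) (v.getD j 0) ω

lemma tpos_nil (B : BRW Ω) (v : List ℕ) (ω : Ω) : tpos B ([]) v ω = B.pos v ω := by
  simp [tpos, BRW.pos]

lemma append_mem_gen (B : BRW Ω) {k m : ℕ} {u v : List ℕ} {ω : Ω}
    (hu : u ∈ B.gen k ω) (hv : v.length = m)
    (htm : ∀ j < m, v.getD j 0 < B.N (u ++ v.take j) ω) :
    u ++ v ∈ B.gen (k + m) ω := by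
  obtain ⟨hul, huc⟩ := (mem_gen_iff B).mp hu
  apply (mem_gen_iff B).mpr
  refine ⟨by simp [hul, hv], ?_⟩
  intro j hj
  by_cases hjk : j < k
  · rw [List.take_append_of_le_length (by omega), List.getD_append _ _ _ _ (by omega)]
    exact huc j hjk
  · have hik : j - k < m := by omega
    have h1 : (u ++ v).take j = u ++ v.take (j - k) := by
      rw [List.take_append, List.take_of_length_le (by omega)]
      congr 2
      omega
    have h2 : (u ++ v).getD j 0 = v.getD (j - k) 0 := by
      rw [List.getD_append_right _ _ _ _ (by omega)]
      congr 1
      omega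
    rw [h1, h2]
    exact htm _ hik

lemma pos_append (B : BRW Ω) (u v : List ℕ) (ω : Ω) :
    B.pos (u ++ v) ω = B.pos u ω + tpos B u v ω := by
  unfold BRW.pos tpos
  rw [List.length_append, Finset.sum_range_add]
  congr 1
  · apply Finset.sum_congr rfl
    intro j hj
    have hj' : j < u.length := Finset.mem_range.mp hj
    rw [List.take_append_of_le_length (by omega), List.getD_append _ _ _ _ hj']
  · apply Finset.sum_congr rfl
    intro j hj
    have hj' : j < v.length := Finset.mem_range.mp hj
    have h1 : (u ++ v).take (u.length + j) = u ++ v.take j := by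
      rw [List.take_append, List.take_of_length_le (by omega)]
      congr 2
      omega
    have h2 : (u ++ v).getD (u.length + j) 0 = v.getD j 0 := by
      rw [List.getD_append_right _ _ _ _ (by omega)]
      congr 1
      omega
    rw [h1, h2]

/-! ### Events -/

def Aset (B : BRW Ω) (n : ℕ) (y : ℝ) : Set Ω :=
  {ω | ∀ u ∈ B.gen n ω, B.pos u ω ≤ mshift n - y}

def Eset (B : BRW Ω) (k : ℕ) (a : ℝ) (s : Finset (List ℕ)) : Set Ω :=
  {ω | (B.gen k ω).filter (fun u => -(k : ℝ) * a ≤ B.pos u ω) = s}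

def FailSet (B : BRW Ω) (u : List ℕ) (m : ℕ) (t : ℝ) : Set Ω :=
  {ω | ∀ v : List ℕ, v.length = m →
    (∀ j < m, v.getD j 0 < B.N (u ++ v.take j) ω) → tpos B u v ω ≤ t}

def SuccSet (B : BRW Ω) (u : List ℕ) (m : ℕ) (r : ℝ) : Set Ω :=
  {ω | ∃ v : List ℕ, v.length = m ∧
    (∀ j < m, v.getD j 0 < B.N (u ++ v.take j) ω) ∧ r ≤ tpos B u v ω}

def SuccSetV (B : BRW Ω) (u : List ℕ) (m : ℕ) (r : ℝ) (V : Finset (List ℕ)) : Set Ω :=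
  {ω | ∃ v ∈ V, v.length = m ∧
    (∀ j < m, v.getD j 0 < B.N (u ++ v.take j) ω) ∧ r ≤ tpos B u v ω}

lemma Eset_disjoint (B : BRW Ω) (k : ℕ) (a : ℝ) {s s' : Finset (List ℕ)} (h : s ≠ s') :
    Disjoint (Eset B k a s) (Eset B k a s') := by
  rw [Set.disjoint_left]
  intro ω h1 h2
  have e1 : (B.gen k ω).filter (fun u => -(k : ℝ) * a ≤ B.pos u ω) = s := h1
  have e2 : (B.gen k ω).filter (fun u => -(k : ℝ) * a ≤ B.pos u ω) = s' := h2
  exact h (e1.symm.trans e2)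

/-! ### Measurability w.r.t. a sub-σ-algebra -/

def blk (B : BRW Ω) (S : Set (List ℕ)) : MeasurableSpace Ω :=
  ⨆ v ∈ S, MeasurableSpace.comap (F B v) inferInstance

lemma measurable_F_blk (B : BRW Ω) {S : Set (List ℕ)} {v : List ℕ} (hv : v ∈ S) :
    Measurable[blk B S] (F B v) := by
  rw [measurable_iff_comap_le]
  exact le_iSup₂ (f := fun v (_ : v ∈ S) => MeasurableSpace.comap (F B v) inferInstance) v hv

lemma measN_blk (B : BRW Ω) {S : Set (List ℕ)} {v : List ℕ} (hv : v ∈ S) :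
    Measurable[blk B S] (B.N v) :=
  measurable_fst.comp (measurable_F_blk B hv)

lemma measL_blk (B : BRW Ω) {S : Set (List ℕ)} {v : List ℕ} (hv : v ∈ S) (i : ℕ) :
    Measurable[blk B S] (B.L v i) :=
  ((measurable_pi_apply i).comp measurable_snd).comp (measurable_F_blk B hv)

lemma indep_blk (B : BRW Ω) {S T : Set (List ℕ)} (hST : Disjoint S T) :
    Indep (blk B S) (blk B T) B.μ := by
  exact indep_iSup_of_disjoint (fun v => (measurable_F B v).comap_le) B.indep hST

lemma blk_le (B : BRW Ω) (S : Set (List ℕ)) : blk B S ≤ (inferInstance : MeasurableSpace Ω) :=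
  iSup₂_le fun v _ => (measurable_F B v).comap_le

lemma ofBlk {B : BRW Ω} {S : Set (List ℕ)} {X : Set Ω} (h : MeasurableSet[blk B S] X) :
    MeasurableSet X :=
  MeasurableSpace.le_def.mp (blk_le B S) _ h

lemma measurableSet_mem_gen (B : BRW Ω) {S : Set (List ℕ)} {k : ℕ}
    (hS : ∀ v : List ℕ, v.length < k → v ∈ S) (u : List ℕ) :
    MeasurableSet[blk B S] {ω | u ∈ B.gen k ω} := by
  by_cases hu : u.length = k
  · have he : {ω | u ∈ B.gen k ω} = ⋂ j ∈ Set.Iio k, {ω | u.getD j 0 < B.N (u.take j) ω} := by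
      ext ω
      simp only [Set.mem_setOf_eq, mem_gen_iff B, hu, true_and, Set.mem_iInter, Set.mem_Iio]
    rw [he]
    refine MeasurableSet.biInter (Set.to_countable _) fun j hj => ?_
    have hj' : j < k := hj
    exact measN_blk B (hS (u.take j) (by simp [List.length_take]; omega)) measurableSet_Ioi
  · have he : {ω | u ∈ B.gen k ω} = ∅ := by
      ext ω
      simp only [Set.mem_setOf_eq, Set.mem_empty_iff_false, iff_false]
      intro h
      exact hu (length_of_mem_gen B h)
    rw [he]
    exact @MeasurableSet.empty Ω (blk B S)

lemma measurable_pos (B : BRW Ω) {S : Set (List ℕ)} {k : ℕ}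
    (hS : ∀ v : List ℕ, v.length < k → v ∈ S)
    {u : List ℕ} (hu : u.length ≤ k) : Measurable[blk B S] (B.pos u) := by
  unfold BRW.pos
  refine Finset.measurable_sum _ fun j hj => ?_
  have hj' : j < u.length := Finset.mem_range.mp hj
  exact measL_blk B (hS (u.take j) (by simp [List.length_take]; omega)) _

lemma measurableSet_Eset (B : BRW Ω) {S : Set (List ℕ)} {k : ℕ}
    (hS : ∀ v : List ℕ, v.length < k → v ∈ S)
    (a : ℝ) (s : Finset (List ℕ)) : MeasurableSet[blk B S] (Eset B k a s) := by
  have he : Eset B k a s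
      = ⋂ u : List ℕ, {ω | u ∈ s ↔ (u ∈ B.gen k ω ∧ -(k : ℝ) * a ≤ B.pos u ω)} := by
    ext ω
    simp only [Eset, Set.mem_setOf_eq, Set.mem_iInter]
    constructor
    · rintro rfl u
      simp [Finset.mem_filter]
    · intro h
      ext u
      rw [Finset.mem_filter]
      exact (h u).symm
  rw [he]
  refine MeasurableSet.iInter fun u => ?_
  by_cases hul : u.length = k
  · have hmeas : MeasurableSet[blk B S] {ω | u ∈ B.gen k ω ∧ -(k : ℝ) * a ≤ B.pos u ω} := by
      refine MeasurableSet.inter (measurableSet_mem_gen B hS u) ?_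
      exact measurable_pos B hS (le_of_eq hul) measurableSet_Ici
    by_cases hus : u ∈ s
    · have he2 : {ω | u ∈ s ↔ (u ∈ B.gen k ω ∧ -(k : ℝ) * a ≤ B.pos u ω)}
          = {ω | u ∈ B.gen k ω ∧ -(k : ℝ) * a ≤ B.pos u ω} := by
        ext ω; simp [hus]
      rw [he2]; exact hmeas
    · have he2 : {ω | u ∈ s ↔ (u ∈ B.gen k ω ∧ -(k : ℝ) * a ≤ B.pos u ω)}
          = {ω | u ∈ B.gen k ω ∧ -(k : ℝ) * a ≤ B.pos u ω}ᶜ := by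
        ext ω; simp [hus]
      rw [he2]; exact hmeas.compl
  · have hgen : ∀ ω, u ∉ B.gen k ω := fun ω h => hul (length_of_mem_gen B h)
    by_cases hus : u ∈ s
    · have he2 : {ω | u ∈ s ↔ (u ∈ B.gen k ω ∧ -(k : ℝ) * a ≤ B.pos u ω)} = ∅ := by
        ext ω; simp [hus, hgen ω]
      rw [he2]; exact @MeasurableSet.empty Ω (blk B S)
    · have he2 : {ω | u ∈ s ↔ (u ∈ B.gen k ω ∧ -(k : ℝ) * a ≤ B.pos u ω)} = Set.univ := by
        ext ω; simp [hus, hgen ω]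
      rw [he2]; exact @MeasurableSet.univ Ω (blk B S)

lemma measurable_tpos (B : BRW Ω) {S : Set (List ℕ)} (u : List ℕ)
    (hS : ∀ w : List ℕ, u ++ w ∈ S) (v : List ℕ) :
    Measurable[blk B S] (tpos B u v) := by
  unfold tpos
  exact Finset.measurable_sum _ fun j hj => measL_blk B (hS _) _

lemma measurableSet_FailSet (B : BRW Ω) {S : Set (List ℕ)} {u : List ℕ} {m : ℕ} {t : ℝ}
    (hS : ∀ w : List ℕ, u ++ w ∈ S) :
    MeasurableSet[blk B S] (FailSet B u m t) := by
  have he : FailSet B u m t = ⋂ v : List ℕ,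
      (if v.length = m then
        ((⋂ j ∈ Set.Iio m, {ω | v.getD j 0 < B.N (u ++ v.take j) ω})ᶜ ∪ {ω | tpos B u v ω ≤ t})
      else Set.univ) := by
    ext ω
    simp only [FailSet, Set.mem_setOf_eq, Set.mem_iInter]
    constructor
    · intro h v
      by_cases hv : v.length = m
      · simp only [hv, if_true, Set.mem_union, Set.mem_compl_iff, Set.mem_iInter, Set.mem_Iio,
          Set.mem_setOf_eq]
        by_cases hm : ∀ j < m, v.getD j 0 < B.N (u ++ v.take j) ω
        · exact Or.inr (h v hv hm)
        · exact Or.inl (by push_neg at hm ⊢; obtain ⟨j, hj1, hj2⟩ := hm; exact ⟨j, hj1, hj2⟩)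
      · simp [hv]
    · intro h v hv hm
      have h2 := h v
      simp only [hv, if_true, Set.mem_union, Set.mem_compl_iff, Set.mem_iInter, Set.mem_Iio,
        Set.mem_setOf_eq] at h2
      rcases h2 with h' | h'
      · exact absurd (fun j hj => hm j hj)
          (by push_neg at h' ⊢; obtain ⟨j, h1, h2'⟩ := h'; exact ⟨j, h1, h2'⟩)
      · exact h'
  rw [he]
  refine MeasurableSet.iInter fun v => ?_
  by_cases hv : v.length = m
  · simp only [hv, if_true]
    refine MeasurableSet.union ?_ ?_
    · refine MeasurableSet.compl ?_
      refine MeasurableSet.biInter (Set.to_countable _) fun j hj => ?_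
      exact measN_blk B (hS (v.take j)) measurableSet_Ioi
    · exact measurable_tpos B u hS v measurableSet_Iic
  · simp only [hv, if_false]
    exact @MeasurableSet.univ Ω (blk B S)

lemma measurableSet_SuccSet (B : BRW Ω) {S : Set (List ℕ)} {u : List ℕ} {m : ℕ} {r : ℝ}
    (hS : ∀ w : List ℕ, u ++ w ∈ S) :
    MeasurableSet[blk B S] (SuccSet B u m r) := by
  have he : SuccSet B u m r = ⋃ v : List ℕ,
      (if v.length = m then
        ((⋂ j ∈ Set.Iio m, {ω | v.getD j 0 < B.N (u ++ v.take j) ω}) ∩ {ω | r ≤ tpos B u v ω})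
      else (∅ : Set Ω)) := by
    ext ω
    simp only [SuccSet, Set.mem_setOf_eq, Set.mem_iUnion]
    constructor
    · rintro ⟨v, h1, h2, h3⟩
      refine ⟨v, ?_⟩
      simp only [h1, if_true, Set.mem_inter_iff, Set.mem_iInter, Set.mem_Iio, Set.mem_setOf_eq]
      exact ⟨fun j hj => h2 j hj, h3⟩
    · rintro ⟨v, hv⟩
      by_cases h1 : v.length = m
      · simp only [h1, if_true, Set.mem_inter_iff, Set.mem_iInter, Set.mem_Iio,
          Set.mem_setOf_eq] at hv
        exact ⟨v, h1, fun j hj => hv.1 j hj, hv.2⟩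
      · simp [h1] at hv
  rw [he]
  refine MeasurableSet.iUnion fun v => ?_
  by_cases h1 : v.length = m
  · simp only [h1, if_true]
    refine MeasurableSet.inter ?_ ?_
    · refine MeasurableSet.biInter (Set.to_countable _) fun j hj => ?_
      exact measN_blk B (hS (v.take j)) measurableSet_Ioi
    · exact measurable_tpos B u hS v measurableSet_Ici
  · simp only [h1, if_false]
    exact @MeasurableSet.empty Ω (blk B S)

/-- Ambient versions. -/
lemma measurableSet_Eset' (B : BRW Ω) (k : ℕ) (a : ℝ) (s : Finset (List ℕ)) :
    MeasurableSet (Eset B k a s) :=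
  ofBlk (measurableSet_Eset B (S := Set.univ) (fun _ _ => Set.mem_univ _) a s)

lemma measurableSet_FailSet' (B : BRW Ω) (u : List ℕ) (m : ℕ) (t : ℝ) :
    MeasurableSet (FailSet B u m t) :=
  ofBlk (measurableSet_FailSet B (S := Set.univ) (fun _ => Set.mem_univ _))

lemma measurableSet_SuccSet' (B : BRW Ω) (u : List ℕ) (m : ℕ) (r : ℝ) :
    MeasurableSet (SuccSet B u m r) :=
  ofBlk (measurableSet_SuccSet B (S := Set.univ) (fun _ => Set.mem_univ _))

lemma measurableSet_mem_gen' (B : BRW Ω) (k : ℕ) (u : List ℕ) :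
    MeasurableSet {ω | u ∈ B.gen k ω} :=
  ofBlk (measurableSet_mem_gen B (S := Set.univ) (fun _ _ => Set.mem_univ _) u)

lemma not_prefix_append_of_ne {u0 u : List ℕ} (hlen : u0.length = u.length) (hne : u ≠ u0)
    (w : List ℕ) : ¬ u0 <+: u ++ w := by
  intro hp
  apply hne
  have h1 : u0 = (u ++ w).take u0.length := List.prefix_iff_eq_take.mp hp
  rw [hlen, List.take_append_of_le_length le_rfl, List.take_length] at h1
  exact h1.symm

lemma mu_Eset_inter_fail (B : BRW Ω) {k : ℕ} (a : ℝ) (m : ℕ) (t : ℝ) (s : Finset (List ℕ))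
    (s' : Finset (List ℕ)) (hs : ∀ u ∈ s', u.length = k) :
    B.μ (Eset B k a s ∩ ⋂ u ∈ s', FailSet B u m t)
      = B.μ (Eset B k a s) * ∏ u ∈ s', B.μ (FailSet B u m t) := by
  induction s' using Finset.induction_on with
  | empty => simp
  | @insert u0 s'' hu0 ih =>
    have hlen0 : u0.length = k := hs u0 (Finset.mem_insert_self _ _)
    rw [Finset.prod_insert hu0]
    have hEq : Eset B k a s ∩ ⋂ u ∈ insert u0 s'', FailSet B u m t
        = (Eset B k a s ∩ ⋂ u ∈ s'', FailSet B u m t) ∩ FailSet B u0 m t := by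
      rw [Finset.set_biInter_insert]
      ext ω
      simp only [Set.mem_inter_iff, Set.mem_iInter]
      tauto
    rw [hEq]
    have hindep : Indep (blk B {v | ¬ u0 <+: v}) (blk B {v | u0 <+: v}) B.μ := by
      refine indep_blk B ?_
      rw [Set.disjoint_left]
      intro v hv hv2
      exact hv hv2
    have hX : MeasurableSet[blk B {v | ¬ u0 <+: v}]
        (Eset B k a s ∩ ⋂ u ∈ s'', FailSet B u m t) := by
      refine MeasurableSet.inter ?_ ?_
      · refine measurableSet_Eset B ?_ a s
        intro v hv hp
        have := hp.length_le
        omega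
      · refine MeasurableSet.biInter (Set.to_countable _) fun u hu => ?_
        have hul : u.length = k := hs u (Finset.mem_insert_of_mem hu)
        have hne : u ≠ u0 := by rintro rfl; exact hu0 hu
        exact measurableSet_FailSet B (fun w => not_prefix_append_of_ne (by omega) hne w)
    have hY : MeasurableSet[blk B {v | u0 <+: v}] (FailSet B u0 m t) :=
      measurableSet_FailSet B (fun w => List.prefix_append u0 w)
    rw [(ProbabilityTheory.Indep_iff _ _ _).1 hindep _ _ hX hY,
      ih (fun u hu => hs u (Finset.mem_insert_of_mem hu))]
    ring

/-! ### Law transfer -/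

def nuB (B : BRW Ω) : Measure E := Measure.map (F B ([])) B.μ

instance (B : BRW Ω) : IsProbabilityMeasure (nuB B) :=
  Measure.isProbabilityMeasure_map (measurable_F B ([])).aemeasurable

lemma map_F_eq (B : BRW Ω) (u : List ℕ) : Measure.map (F B u) B.μ = nuB B := B.ident u ([])

lemma map_tuple (B : BRW Ω) (u : List ℕ) (W : Finset (List ℕ)) :
    Measure.map (fun ω => fun w : ↥W => F B (u ++ ↑w) ω) B.μ
      = Measure.pi (fun _ : ↥W => nuB B) := by
  refine (Measure.pi_eq fun s hs => ?_).symm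
  have hT : Measurable (fun ω => fun w : ↥W => F B (u ++ ↑w) ω) :=
    measurable_pi_lambda _ fun w => measurable_F B _
  rw [Measure.map_apply hT (MeasurableSet.univ_pi hs)]
  set sets : List ℕ → Set E := fun i =>
    if h : i.drop u.length ∈ W then s ⟨i.drop u.length, h⟩ else Set.univ with hsets_def
  have hsets_all : ∀ i, MeasurableSet (sets i) := by
    intro i
    by_cases h : i.drop u.length ∈ W
    · simp only [hsets_def, dif_pos h]; exact hs _
    · simp only [hsets_def, dif_neg h]; exact MeasurableSet.univ
  have hset_app : ∀ w : ↥W, sets (u ++ ↑w) = s w := by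
    intro w
    have hd : (u ++ (w : List ℕ)).drop u.length = (w : List ℕ) := List.drop_left
    simp only [hsets_def, hd, dif_pos w.2]
  have hpre : (fun ω => fun w : ↥W => F B (u ++ ↑w) ω) ⁻¹' Set.pi Set.univ s
      = ⋂ i ∈ W.image (fun w => u ++ w), F B i ⁻¹' sets i := by
    ext ω
    simp only [Set.mem_preimage, Set.mem_pi, Set.mem_univ, forall_true_left, Set.mem_iInter,
      Finset.mem_image]
    constructor
    · rintro h i ⟨w, hw, rfl⟩
      have := h ⟨w, hw⟩
      rwa [← hset_app ⟨w, hw⟩] at this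
    · intro h w
      have := h (u ++ ↑w) ⟨↑w, w.2, rfl⟩
      rwa [hset_app w] at this
  rw [hpre]
  have hprod := ProbabilityTheory.iIndepFun.measure_inter_preimage_eq_mul B.indep
    (W.image (fun w => u ++ w)) (sets := sets) (fun i _ => hsets_all i)
  calc B.μ (⋂ i ∈ W.image (fun w => u ++ w), F B i ⁻¹' sets i)
      = ∏ i ∈ W.image (fun w => u ++ w),
          B.μ ((fun ω => (B.N i ω, fun j => B.L i j ω)) ⁻¹' sets i) := hprod
    _ = ∏ w ∈ W, B.μ (F B (u ++ w) ⁻¹' sets (u ++ w)) := by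
        refine Finset.prod_image ?_
        intro a _ b _ h
        simpa using h
    _ = ∏ w ∈ W, nuB B (sets (u ++ w)) := by
        refine Finset.prod_congr rfl fun w _ => ?_
        rw [← map_F_eq B (u ++ w), Measure.map_apply (measurable_F B _) (hsets_all _)]
    _ = ∏ w ∈ W.attach, nuB B (sets (u ++ ↑w)) := (Finset.prod_attach W _).symm
    _ = ∏ w : ↥W, nuB B (s w) := by
        exact Finset.prod_congr rfl fun w _ => by rw [hset_app w]

lemma mu_SuccSetV (B : BRW Ω) (u : List ℕ) (m : ℕ) (r : ℝ) (V : Finset (List ℕ)) :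
    B.μ (SuccSetV B u m r V) = B.μ (SuccSetV B ([]) m r V) := by
  set W : Finset (List ℕ) := V.biUnion (fun v => (Finset.range v.length).image (fun j => v.take j))
    with hW
  have hWmem : ∀ v ∈ V, ∀ j < v.length, v.take j ∈ W := by
    intro v hv j hj
    rw [hW, Finset.mem_biUnion]
    exact ⟨v, hv, Finset.mem_image.mpr ⟨j, Finset.mem_range.mpr hj, rfl⟩⟩
  set xval : (↥W → E) → List ℕ → E :=
    fun x w => if h : w ∈ W then x ⟨w, h⟩ else (0, fun _ => 0) with hxval
  set C : Set (↥W → E) := {x | ∃ v ∈ V, v.length = m ∧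
    (∀ j < m, v.getD j 0 < (xval x (v.take j)).1) ∧
    r ≤ ∑ j ∈ Finset.range v.length, (xval x (v.take j)).2 (v.getD j 0)} with hC
  have hxm : ∀ w, Measurable fun x : ↥W → E => xval x w := by
    intro w
    by_cases h : w ∈ W
    · simp only [hxval, dif_pos h]; exact measurable_pi_apply _
    · simp only [hxval, dif_neg h]; exact measurable_const
  have hCm : MeasurableSet C := by
    have he : C = ⋃ v ∈ (V : Set (List ℕ)),
        ({x : ↥W → E | v.length = m} ∩
          ((⋂ j ∈ Set.Iio m, {x : ↥W → E | v.getD j 0 < (xval x (v.take j)).1}) ∩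
            {x : ↥W → E | r ≤ ∑ j ∈ Finset.range v.length, (xval x (v.take j)).2 (v.getD j 0)})) := by
      ext x
      simp only [hC, Set.mem_setOf_eq, Set.mem_iUnion, Set.mem_inter_iff, Set.mem_iInter,
        Set.mem_Iio, Finset.mem_coe, exists_prop]
    rw [he]
    refine MeasurableSet.biUnion (Set.to_countable _) fun v hv => ?_
    refine MeasurableSet.inter ?_ (MeasurableSet.inter ?_ ?_)
    · by_cases h : v.length = m <;> simp [h]
    · refine MeasurableSet.biInter (Set.to_countable _) fun j hj => ?_
      exact (measurable_fst.comp (hxm _)) measurableSet_Ioi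
    · have hsum : Measurable fun x : ↥W → E =>
          ∑ j ∈ Finset.range v.length, (xval x (v.take j)).2 (v.getD j 0) :=
        Finset.measurable_sum _ fun j _ =>
          (measurable_pi_apply _).comp (measurable_snd.comp (hxm _))
      exact hsum measurableSet_Ici
  have hpre : ∀ u' : List ℕ,
      (fun ω => fun w : ↥W => F B (u' ++ ↑w) ω) ⁻¹' C = SuccSetV B u' m r V := by
    intro u'
    ext ω
    have hx : ∀ v ∈ V, ∀ j < v.length,
        xval (fun w : ↥W => F B (u' ++ ↑w) ω) (v.take j) = F B (u' ++ v.take j) ω := by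
      intro v hv j hj
      have hmem : v.take j ∈ W := hWmem v hv j hj
      simp only [hxval, dif_pos hmem]
    simp only [Set.mem_preimage, hC, Set.mem_setOf_eq, SuccSetV]
    constructor
    · rintro ⟨v, hv, h1, h2, h3⟩
      refine ⟨v, hv, h1, ?_, ?_⟩
      · intro j hj
        have := h2 j hj
        rwa [hx v hv j (by omega)] at this
      · unfold tpos
        rw [Finset.sum_congr rfl fun j hj => by
          rw [hx v hv j (Finset.mem_range.mp hj)]] at h3
        exact h3
    · rintro ⟨v, hv, h1, h2, h3⟩
      refine ⟨v, hv, h1, ?_, ?_⟩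
      · intro j hj
        rw [hx v hv j (by omega)]
        exact h2 j hj
      · rw [Finset.sum_congr rfl fun j hj => by
          rw [hx v hv j (Finset.mem_range.mp hj)]]
        exact h3
  have hmeas : ∀ u' : List ℕ, Measurable (fun ω => fun w : ↥W => F B (u' ++ ↑w) ω) :=
    fun u' => measurable_pi_lambda _ fun w => measurable_F B _
  calc B.μ (SuccSetV B u m r V)
      = Measure.map (fun ω => fun w : ↥W => F B (u ++ ↑w) ω) B.μ C := by
        rw [Measure.map_apply (hmeas u) hCm, hpre u]
    _ = Measure.map (fun ω => fun w : ↥W => F B (([]) ++ ↑w) ω) B.μ C := by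
        rw [map_tuple, map_tuple]
    _ = B.μ (SuccSetV B ([]) m r V) := by
        rw [Measure.map_apply (hmeas ([])) hCm, hpre ([])]

lemma mu_SuccSet (B : BRW Ω) (u : List ℕ) (m : ℕ) (r : ℝ) :
    B.μ (SuccSet B u m r) = B.μ (SuccSet B ([]) m r) := by
  set V : ℕ → Finset (List ℕ) :=
    fun J => (Finset.range J).image (Denumerable.ofNat (List ℕ)) with hV
  have hunion : ∀ u' : List ℕ, SuccSet B u' m r = ⋃ J : ℕ, SuccSetV B u' m r (V J) := by
    intro u'
    ext ω
    simp only [SuccSet, SuccSetV, Set.mem_setOf_eq, Set.mem_iUnion]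
    constructor
    · rintro ⟨v, h1, h2, h3⟩
      refine ⟨Encodable.encode v + 1, v, ?_, h1, h2, h3⟩
      rw [hV, Finset.mem_image]
      exact ⟨Encodable.encode v, Finset.mem_range.mpr (Nat.lt_succ_self _),
        Denumerable.ofNat_encode v⟩
    · rintro ⟨J, v, _, h1, h2, h3⟩
      exact ⟨v, h1, h2, h3⟩
  have hmono : ∀ u' : List ℕ, Monotone (fun J => SuccSetV B u' m r (V J)) := by
    intro u' J1 J2 hJ ω hω
    obtain ⟨v, hv, h⟩ := hω
    refine ⟨v, ?_, h⟩
    rw [hV, Finset.mem_image] at hv ⊢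
    obtain ⟨j, hj, hje⟩ := hv
    exact ⟨j, Finset.mem_range.mpr (lt_of_lt_of_le (Finset.mem_range.mp hj) hJ), hje⟩
  have h1 := tendsto_measure_iUnion_atTop (μ := B.μ) (hmono u)
  have h2 := tendsto_measure_iUnion_atTop (μ := B.μ) (hmono ([]))
  have h1' : Tendsto (fun J => B.μ (SuccSetV B ([]) m r (V J))) atTop
      (nhds (B.μ (⋃ J, SuccSetV B u m r (V J)))) := by
    refine (tendsto_congr fun J => ?_).mp h1
    exact mu_SuccSetV B u m r (V J)
  rw [hunion u, hunion ([])]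
  exact tendsto_nhds_unique h1' h2

/-! ### The per-subtree failure bound -/

lemma prob_toReal_le_one (B : BRW Ω) (X : Set Ω) : (B.μ X).toReal ≤ 1 := by
  rw [← ENNReal.toReal_one]
  exact ENNReal.toReal_mono ENNReal.one_ne_top prob_le_one

lemma fail_bound (B : BRW Ω) {c : ℝ}
    (htail : ∀ m : ℕ, 1 ≤ m → ∀ y : ℝ, y ∈ Set.Icc 0 (Real.sqrt m) →
      c * (1 + y) * Real.exp (-y) ≤
        (B.μ {ω | ∃ u ∈ B.gen m ω, mshift m + y ≤ B.pos u ω}).toReal)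
    {u : List ℕ} {m : ℕ} {t y' : ℝ} (hm : 1 ≤ m) (hy0 : 0 ≤ y')
    (hy2 : y' ≤ Real.sqrt m) (ht : t < mshift m + y') :
    (B.μ (FailSet B u m t)).toReal ≤ 1 - c * (1 + y') * Real.exp (-y') := by
  set r := mshift m + y' with hr
  have hdisj : Disjoint (FailSet B u m t) (SuccSet B u m r) := by
    rw [Set.disjoint_left]
    rintro ω hF ⟨v, hvl, hvm, hvp⟩
    have := hF v hvl hvm
    linarith
  have hsm : MeasurableSet (SuccSet B u m r) := measurableSet_SuccSet' B u m r
  have hle : B.μ (FailSet B u m t) + B.μ (SuccSet B u m r) ≤ 1 := by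
    rw [← measure_union hdisj hsm]
    exact prob_le_one
  have h1 : (B.μ (FailSet B u m t)).toReal + (B.μ (SuccSet B u m r)).toReal ≤ 1 := by
    rw [← ENNReal.toReal_add (measure_ne_top _ _) (measure_ne_top _ _), ← ENNReal.toReal_one]
    exact ENNReal.toReal_mono ENNReal.one_ne_top hle
  have h2 : c * (1 + y') * Real.exp (-y') ≤ (B.μ (SuccSet B u m r)).toReal := by
    rw [mu_SuccSet]
    have hset : SuccSet B ([]) m r = {ω | ∃ w ∈ B.gen m ω, mshift m + y' ≤ B.pos w ω} := by
      ext ω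
      simp only [SuccSet, Set.mem_setOf_eq]
      constructor
      · rintro ⟨v, hvl, hvm, hvp⟩
        refine ⟨v, (mem_gen_iff B).mpr ⟨hvl, ?_⟩, ?_⟩
        · intro j hj
          have := hvm j (by omega)
          simpa using this
        · rw [← tpos_nil B v ω]
          exact hvp
      · rintro ⟨w, hw, hp⟩
        obtain ⟨hl, hcond⟩ := (mem_gen_iff B).mp hw
        refine ⟨w, hl, ?_, ?_⟩
        · intro j hj
          have := hcond j (by omega)
          simpa using this
        · rw [tpos_nil B w ω]
          exact hp
    rw [hset]
    exact htail m hm y' ⟨hy0, hy2⟩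
  linarith

/-! ### Core estimate -/

lemma pow_le_rpow_aux {q x : ℝ} (hq0 : 0 ≤ q) (hq1 : q ≤ 1) (hx : 0 < x) {n : ℕ}
    (hxn : x ≤ n) : q ^ n ≤ q ^ (x : ℝ) := by
  rcases eq_or_lt_of_le hq0 with h | h
  · have hn : n ≠ 0 := by
      rintro rfl
      simp only [Nat.cast_zero] at hxn
      linarith
    rw [← h, zero_pow hn, Real.zero_rpow (ne_of_gt hx)]
  · rw [← Real.rpow_natCast q n]
    exact Real.rpow_le_rpow_of_exponent_ge h hq1 hxn

lemma Aset_inter_subset (B : BRW Ω) {k m : ℕ} {a y t : ℝ}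
    (ht : mshift (k + m) - y + (k : ℝ) * a ≤ t) (s : Finset (List ℕ)) :
    Aset B (k + m) y ∩ Eset B k a s ⊆ Eset B k a s ∩ ⋂ u ∈ s, FailSet B u m t := by
  rintro ω ⟨hA, hE⟩
  refine ⟨hE, Set.mem_iInter₂.mpr fun u hu => ?_⟩
  intro v hvl hvm
  have hE' : (B.gen k ω).filter (fun u => -(k : ℝ) * a ≤ B.pos u ω) = s := hE
  rw [← hE'] at hu
  obtain ⟨hug, hup⟩ := Finset.mem_filter.mp hu
  have hmem := append_mem_gen B hug hvl hvm
  have hpos := hA (u ++ v) hmem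
  have hsplit := pos_append B u v ω
  have hAval : B.pos (u ++ v) ω ≤ mshift (k + m) - y := hpos
  linarith

lemma core_est (B : BRW Ω) {k m : ℕ} {a ρ y q t : ℝ} (hρ : 1 < ρ)
    (ht : mshift (k + m) - y + (k : ℝ) * a ≤ t)
    (hfail : ∀ u : List ℕ, u.length = k → (B.μ (FailSet B u m t)).toReal ≤ q)
    (hq0 : 0 ≤ q) (hq1 : q ≤ 1) :
    (B.μ (Aset B (k + m) y ∩
      {ω | ρ ^ k ≤ (((B.gen k ω).filter fun u => -(k : ℝ) * a ≤ B.pos u ω).card : ℝ)})).toReal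
      ≤ q ^ (ρ ^ k : ℝ) := by
  set G := {ω | ρ ^ k ≤ (((B.gen k ω).filter fun u => -(k : ℝ) * a ≤ B.pos u ω).card : ℝ)}
    with hG
  have hρk : (0 : ℝ) < ρ ^ k := pow_pos (lt_trans zero_lt_one hρ) k
  have hcov : Aset B (k + m) y ∩ G ⊆
      ⋃ s : {s : Finset (List ℕ) // ρ ^ k ≤ (s.card : ℝ) ∧ ∀ u ∈ s, u.length = k},
        (Aset B (k + m) y ∩ Eset B k a s.1) := by
    rintro ω ⟨hA, hGω⟩
    refine Set.mem_iUnion.mpr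
      ⟨⟨(B.gen k ω).filter fun u => -(k : ℝ) * a ≤ B.pos u ω, hGω, ?_⟩, hA, rfl⟩
    intro u hu
    exact length_of_mem_gen B (Finset.mem_filter.mp hu).1
  have hstep : ∀ s : {s : Finset (List ℕ) // ρ ^ k ≤ (s.card : ℝ) ∧ ∀ u ∈ s, u.length = k},
      B.μ (Aset B (k + m) y ∩ Eset B k a s.1)
        ≤ ENNReal.ofReal (q ^ (ρ ^ k : ℝ)) * B.μ (Eset B k a s.1) := by
    intro s
    calc B.μ (Aset B (k + m) y ∩ Eset B k a s.1)
        ≤ B.μ (Eset B k a s.1 ∩ ⋂ u ∈ s.1, FailSet B u m t) :=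
          measure_mono (Aset_inter_subset B ht s.1)
      _ = B.μ (Eset B k a s.1) * ∏ u ∈ s.1, B.μ (FailSet B u m t) :=
          mu_Eset_inter_fail B a m t s.1 s.1 s.2.2
      _ ≤ B.μ (Eset B k a s.1) * ENNReal.ofReal (q ^ (ρ ^ k : ℝ)) := by
          refine mul_le_mul_right ?_ _
          calc ∏ u ∈ s.1, B.μ (FailSet B u m t)
              ≤ ∏ _u ∈ s.1, ENNReal.ofReal q := by
                refine Finset.prod_le_prod' fun u hu => ?_
                exact (ENNReal.le_ofReal_iff_toReal_le (measure_ne_top _ _) hq0).mpr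
                  (hfail u (s.2.2 u hu))
            _ = ENNReal.ofReal (q ^ s.1.card) := by
                rw [Finset.prod_const, ← ENNReal.ofReal_pow hq0]
            _ ≤ ENNReal.ofReal (q ^ (ρ ^ k : ℝ)) :=
                ENNReal.ofReal_le_ofReal (pow_le_rpow_aux hq0 hq1 hρk s.2.1)
      _ = ENNReal.ofReal (q ^ (ρ ^ k : ℝ)) * B.μ (Eset B k a s.1) := mul_comm _ _
  have hmain : B.μ (Aset B (k + m) y ∩ G) ≤ ENNReal.ofReal (q ^ (ρ ^ k : ℝ)) := by
    calc B.μ (Aset B (k + m) y ∩ G)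
        ≤ B.μ (⋃ s : {s : Finset (List ℕ) // ρ ^ k ≤ (s.card : ℝ) ∧ ∀ u ∈ s, u.length = k},
            (Aset B (k + m) y ∩ Eset B k a s.1)) := measure_mono hcov
      _ ≤ ∑' s : {s : Finset (List ℕ) // ρ ^ k ≤ (s.card : ℝ) ∧ ∀ u ∈ s, u.length = k},
            B.μ (Aset B (k + m) y ∩ Eset B k a s.1) := measure_iUnion_le _
      _ ≤ ∑' s : {s : Finset (List ℕ) // ρ ^ k ≤ (s.card : ℝ) ∧ ∀ u ∈ s, u.length = k},
            ENNReal.ofReal (q ^ (ρ ^ k : ℝ)) * B.μ (Eset B k a s.1) :=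
          ENNReal.tsum_le_tsum hstep
      _ = ENNReal.ofReal (q ^ (ρ ^ k : ℝ)) *
            ∑' s : {s : Finset (List ℕ) // ρ ^ k ≤ (s.card : ℝ) ∧ ∀ u ∈ s, u.length = k},
              B.μ (Eset B k a s.1) := ENNReal.tsum_mul_left
      _ ≤ ENNReal.ofReal (q ^ (ρ ^ k : ℝ)) * 1 := by
          refine mul_le_mul_right ?_ _
          rw [← measure_iUnion ?_ ?_]
          · exact prob_le_one
          · intro s1 s2 hne
            refine Eset_disjoint B k a ?_
            exact fun h => hne (Subtype.ext h)
          · intro s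
            exact measurableSet_Eset' B k a s.1
      _ = ENNReal.ofReal (q ^ (ρ ^ k : ℝ)) := mul_one _
  calc (B.μ (Aset B (k + m) y ∩ G)).toReal
      ≤ (ENNReal.ofReal (q ^ (ρ ^ k : ℝ))).toReal :=
        ENNReal.toReal_mono ENNReal.ofReal_ne_top hmain
    _ = q ^ (ρ ^ k : ℝ) := ENNReal.toReal_ofReal (Real.rpow_nonneg hq0 _)

/-! ### Other measurability facts -/

lemma measurableSet_Xlt (B : BRW Ω) (k : ℕ) (a ρ : ℝ) :
    MeasurableSet {ω | (((B.gen k ω).filter fun u => -(k : ℝ) * a ≤ B.pos u ω).card : ℝ) < ρ ^ k} := by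
  have he : {ω | (((B.gen k ω).filter fun u => -(k : ℝ) * a ≤ B.pos u ω).card : ℝ) < ρ ^ k}
      = ⋃ s : {s : Finset (List ℕ) // (s.card : ℝ) < ρ ^ k}, Eset B k a s.1 := by
    ext ω
    simp only [Set.mem_setOf_eq, Set.mem_iUnion]
    constructor
    · intro h
      exact ⟨⟨(B.gen k ω).filter fun u => -(k : ℝ) * a ≤ B.pos u ω, h⟩, rfl⟩
    · rintro ⟨s, hs⟩
      have : (B.gen k ω).filter (fun u => -(k : ℝ) * a ≤ B.pos u ω) = s.1 := hs
      rw [this]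
      exact s.2
  rw [he]
  exact MeasurableSet.iUnion fun s => measurableSet_Eset' B k a s.1

lemma measurableSet_survival (B : BRW Ω) : MeasurableSet B.survival := by
  have he : B.survival = ⋂ n : ℕ, ⋃ u : List ℕ, {ω | u ∈ B.gen n ω} := by
    ext ω
    simp only [BRW.survival, Set.mem_setOf_eq, Set.mem_iInter, Set.mem_iUnion, Finset.Nonempty]
  rw [he]
  exact MeasurableSet.iInter fun n => MeasurableSet.iUnion fun u =>
    measurableSet_mem_gen' B n u

lemma mshift_strict {k m : ℕ} (hk : 1 ≤ k) (hm : 1 ≤ m) : mshift (k + m) < mshift m := by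
  unfold mshift
  have h1 : Real.log m < Real.log (k + m) := by
    apply Real.log_lt_log
    · exact_mod_cast hm
    · push_cast
      have : (1 : ℝ) ≤ k := by exact_mod_cast hk
      linarith
  push_cast
  nlinarith

end BRWproof


/-- **Bootstrapped deviation bound from the tail estimate.** Suppose the tail estimate
`P(M_m >= m_m + y) >= c(1+y)e^{-y}` holds for `m >= 1`, `y in [0,sqrt m]`, and that a.s. on
the survival event `#{|u|=k : V(u) >= -ka} >= rho^k` for all large `k`. Then for every
`k >= 1` and `y >= 0`,
`limsup_n P(M_n <= m_n - y) <= P(#{|u|=k : V(u) >= -ka} < rho^k)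
  + (1 - c(ka-y)_+ e^{-ka})^{rho^k}`,
and consequently `limsup_n P(M_n <= m_n - y, S) -> 0` along `y = ka - 1`, `k -> infinity`. -/
theorem bootstrap_deviation {Ω : Type} [MeasurableSpace Ω] (B : BRW Ω)
    (c : ℝ) (hc : 0 < c)
    (htail : ∀ m : ℕ, 1 ≤ m → ∀ y : ℝ, y ∈ Set.Icc 0 (Real.sqrt m) →
      c * (1 + y) * Real.exp (-y) ≤
        (B.μ {ω | ∃ u ∈ B.gen m ω, mshift m + y ≤ B.pos u ω}).toReal)
    (a : ℝ) (ha : 0 < a) (ρ : ℝ) (hρ : 1 < ρ)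
    (hgrow : ∀ᵐ ω ∂B.μ, ω ∈ B.survival → ∀ᶠ k : ℕ in Filter.atTop,
      ρ ^ k ≤ (((B.gen k ω).filter fun u => -(k : ℝ) * a ≤ B.pos u ω).card : ℝ)) :
    (∀ k : ℕ, 1 ≤ k → ∀ y : ℝ, 0 ≤ y →
      Filter.limsup (fun n : ℕ =>
          (B.μ {ω | ∀ u ∈ B.gen n ω, B.pos u ω ≤ mshift n - y}).toReal) Filter.atTop ≤
        (B.μ {ω | (((B.gen k ω).filter fun u => -(k : ℝ) * a ≤ B.pos u ω).card : ℝ)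
            < ρ ^ k}).toReal +
          (1 - c * max ((k : ℝ) * a - y) 0 * Real.exp (-((k : ℝ) * a))) ^ ((ρ : ℝ) ^ (k : ℕ) : ℝ)) ∧
    Filter.Tendsto (fun k : ℕ =>
        Filter.limsup (fun n : ℕ =>
          (B.μ ({ω | ∀ u ∈ B.gen n ω, B.pos u ω ≤ mshift n - ((k : ℝ) * a - 1)}
            ∩ B.survival)).toReal) Filter.atTop)
      Filter.atTop (nhds 0) := by
  classical
  have hρ0 : (0 : ℝ) < ρ := lt_trans zero_lt_one hρ
  have hcle : ∀ y' : ℝ, 0 ≤ y' → c * (1 + y') * Real.exp (-y') ≤ 1 := by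
    intro y' hy'
    set m0 : ℕ := max 1 (Nat.ceil (y' ^ 2)) with hm0def
    have hm0 : 1 ≤ m0 := le_max_left _ _
    have hsq : y' ≤ Real.sqrt (m0 : ℝ) := by
      calc y' = Real.sqrt (y' ^ 2) := (Real.sqrt_sq hy').symm
        _ ≤ Real.sqrt (m0 : ℝ) := by
            apply Real.sqrt_le_sqrt
            calc y' ^ 2 ≤ ((Nat.ceil (y' ^ 2) : ℕ) : ℝ) := Nat.le_ceil _
              _ ≤ (m0 : ℝ) := Nat.cast_le.mpr (le_max_right _ _)
    calc c * (1 + y') * Real.exp (-y')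
        ≤ (B.μ {ω | ∃ u ∈ B.gen m0 ω, mshift m0 + y' ≤ B.pos u ω}).toReal :=
          htail m0 hm0 y' ⟨hy', hsq⟩
      _ ≤ 1 := BRWproof.prob_toReal_le_one B _
  constructor
  · -- Part 1
    intro k hk y hy
    have hρk : (0 : ℝ) < ρ ^ k := pow_pos hρ0 k
    refine Filter.limsup_le_of_le (Filter.isCoboundedUnder_le_of_le atTop
      fun n => ENNReal.toReal_nonneg) ?_
    by_cases hya : (k : ℝ) * a - y ≤ 0
    · -- trivial case: the per-subtree bound is 1
      refine Filter.Eventually.of_forall fun n => ?_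
      have h1 : (B.μ {ω | ∀ u ∈ B.gen n ω, B.pos u ω ≤ mshift n - y}).toReal ≤ 1 :=
        BRWproof.prob_toReal_le_one B _
      have h2 : (1 - c * max ((k : ℝ) * a - y) 0 * Real.exp (-((k : ℝ) * a)))
          ^ ((ρ : ℝ) ^ (k : ℕ) : ℝ) = 1 := by
        rw [max_eq_right hya]
        norm_num
      rw [h2]
      have h3 : (0 : ℝ) ≤ (B.μ {ω | (((B.gen k ω).filter fun u =>
          -(k : ℝ) * a ≤ B.pos u ω).card : ℝ) < ρ ^ k}).toReal := ENNReal.toReal_nonneg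
      linarith
    · push_neg at hya
      have hy'0 : (0 : ℝ) ≤ (k : ℝ) * a - y := le_of_lt hya
      have hka0 : (0 : ℝ) ≤ (k : ℝ) * a := by linarith
      have hbig : c * max ((k : ℝ) * a - y) 0 * Real.exp (-((k : ℝ) * a))
          ≤ c * (1 + ((k : ℝ) * a - y)) * Real.exp (-((k : ℝ) * a - y)) := by
        rw [max_eq_left hy'0]
        apply mul_le_mul
        · exact mul_le_mul_of_nonneg_left (by linarith) hc.le
        · exact Real.exp_le_exp.mpr (by linarith)
        · positivity
        · exact mul_nonneg hc.le (by linarith)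
      have hq0 : 0 ≤ 1 - c * max ((k : ℝ) * a - y) 0 * Real.exp (-((k : ℝ) * a)) := by
        have := hcle ((k : ℝ) * a - y) hy'0
        linarith
      have hq1 : 1 - c * max ((k : ℝ) * a - y) 0 * Real.exp (-((k : ℝ) * a)) ≤ 1 := by
        have h0 : 0 ≤ c * max ((k : ℝ) * a - y) 0 * Real.exp (-((k : ℝ) * a)) := by
          have : (0:ℝ) ≤ max ((k : ℝ) * a - y) 0 := le_max_right _ _
          positivity
        linarith
      filter_upwards [eventually_ge_atTop (k + max 1 (Nat.ceil (((k : ℝ) * a) ^ 2)))] with n hn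
      have hm1 : 1 ≤ n - k := by
        have h1 := le_max_left 1 (Nat.ceil (((k : ℝ) * a) ^ 2))
        omega
      have hnm : n = k + (n - k) := by omega
      have hmceil : Nat.ceil (((k : ℝ) * a) ^ 2) ≤ n - k := by
        have h1 := le_max_right 1 (Nat.ceil (((k : ℝ) * a) ^ 2))
        omega
      have hsqm : (k : ℝ) * a ≤ Real.sqrt (n - k : ℕ) := by
        calc (k : ℝ) * a = Real.sqrt (((k : ℝ) * a) ^ 2) := (Real.sqrt_sq hka0).symm
          _ ≤ Real.sqrt (n - k : ℕ) := by
              apply Real.sqrt_le_sqrt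
              calc ((k : ℝ) * a) ^ 2 ≤ (Nat.ceil (((k : ℝ) * a) ^ 2) : ℝ) := Nat.le_ceil _
                _ ≤ ((n - k : ℕ) : ℝ) := by exact_mod_cast hmceil
      have htlt : mshift (k + (n - k)) - y + (k : ℝ) * a
          < mshift (n - k) + ((k : ℝ) * a - y) := by
        have := BRWproof.mshift_strict hk hm1
        linarith
      have hfail : ∀ u : List ℕ, u.length = k →
          (B.μ (BRWproof.FailSet B u (n - k) (mshift (k + (n - k)) - y + (k : ℝ) * a))).toReal
            ≤ 1 - c * max ((k : ℝ) * a - y) 0 * Real.exp (-((k : ℝ) * a)) := by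
        intro u _
        calc (B.μ (BRWproof.FailSet B u (n - k)
              (mshift (k + (n - k)) - y + (k : ℝ) * a))).toReal
            ≤ 1 - c * (1 + ((k : ℝ) * a - y)) * Real.exp (-((k : ℝ) * a - y)) :=
              BRWproof.fail_bound B htail hm1 hy'0 (le_trans (by linarith) hsqm) htlt
          _ ≤ 1 - c * max ((k : ℝ) * a - y) 0 * Real.exp (-((k : ℝ) * a)) := by linarith
      have hcore := BRWproof.core_est B (k := k) (m := n - k) (a := a) (ρ := ρ) (y := y)
        (q := 1 - c * max ((k : ℝ) * a - y) 0 * Real.exp (-((k : ℝ) * a)))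
        (t := mshift (k + (n - k)) - y + (k : ℝ) * a) hρ le_rfl hfail hq0 hq1
      rw [hnm]
      have hsub : BRWproof.Aset B (k + (n - k)) y ⊆
          (BRWproof.Aset B (k + (n - k)) y ∩
            {ω | ρ ^ k ≤ (((B.gen k ω).filter fun u => -(k : ℝ) * a ≤ B.pos u ω).card : ℝ)})
          ∪ {ω | (((B.gen k ω).filter fun u => -(k : ℝ) * a ≤ B.pos u ω).card : ℝ) < ρ ^ k} := by
        intro ω hω
        by_cases hG : ρ ^ k ≤ (((B.gen k ω).filter fun u => -(k : ℝ) * a ≤ B.pos u ω).card : ℝ)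
        · exact Or.inl ⟨hω, hG⟩
        · exact Or.inr (not_le.mp hG)
      have hmu : B.μ (BRWproof.Aset B (k + (n - k)) y)
          ≤ B.μ (BRWproof.Aset B (k + (n - k)) y ∩
              {ω | ρ ^ k ≤ (((B.gen k ω).filter fun u => -(k : ℝ) * a ≤ B.pos u ω).card : ℝ)})
            + B.μ {ω | (((B.gen k ω).filter fun u =>
                -(k : ℝ) * a ≤ B.pos u ω).card : ℝ) < ρ ^ k} :=
        le_trans (measure_mono hsub) (measure_union_le _ _)
      have htr : (B.μ (BRWproof.Aset B (k + (n - k)) y)).toReal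
          ≤ (B.μ (BRWproof.Aset B (k + (n - k)) y ∩
              {ω | ρ ^ k ≤ (((B.gen k ω).filter fun u => -(k : ℝ) * a ≤ B.pos u ω).card : ℝ)})).toReal
            + (B.μ {ω | (((B.gen k ω).filter fun u =>
                -(k : ℝ) * a ≤ B.pos u ω).card : ℝ) < ρ ^ k}).toReal := by
        rw [← ENNReal.toReal_add (measure_ne_top _ _) (measure_ne_top _ _)]
        exact ENNReal.toReal_mono
          (ENNReal.add_ne_top.mpr ⟨measure_ne_top _ _, measure_ne_top _ _⟩) hmu
      calc (B.μ {ω | ∀ u ∈ B.gen (k + (n - k)) ω, B.pos u ω ≤ mshift (k + (n - k)) - y}).toReal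
          ≤ (B.μ (BRWproof.Aset B (k + (n - k)) y ∩
              {ω | ρ ^ k ≤ (((B.gen k ω).filter fun u => -(k : ℝ) * a ≤ B.pos u ω).card : ℝ)})).toReal
            + (B.μ {ω | (((B.gen k ω).filter fun u =>
                -(k : ℝ) * a ≤ B.pos u ω).card : ℝ) < ρ ^ k}).toReal := htr
        _ ≤ (1 - c * max ((k : ℝ) * a - y) 0 * Real.exp (-((k : ℝ) * a))) ^ ((ρ : ℝ) ^ k : ℝ)
            + (B.μ {ω | (((B.gen k ω).filter fun u =>
                -(k : ℝ) * a ≤ B.pos u ω).card : ℝ) < ρ ^ k}).toReal := by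
              have := hcore
              linarith
        _ = (B.μ {ω | (((B.gen k ω).filter fun u =>
                -(k : ℝ) * a ≤ B.pos u ω).card : ℝ) < ρ ^ k}).toReal
            + (1 - c * max ((k : ℝ) * a - y) 0 * Real.exp (-((k : ℝ) * a)))
              ^ ((ρ : ℝ) ^ k : ℝ) := add_comm _ _
  · -- Part 2
    have hSmeas : MeasurableSet B.survival := BRWproof.measurableSet_survival B
    have hBadMeas : ∀ k : ℕ, MeasurableSet
        ({ω | (((B.gen k ω).filter fun u => -(k : ℝ) * a ≤ B.pos u ω).card : ℝ) < ρ ^ k}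
          ∩ B.survival) :=
      fun k => (BRWproof.measurableSet_Xlt B k a ρ).inter hSmeas
    have hBadTendsto : Tendsto (fun k =>
        B.μ ({ω | (((B.gen k ω).filter fun u => -(k : ℝ) * a ≤ B.pos u ω).card : ℝ) < ρ ^ k}
          ∩ B.survival)) atTop (nhds 0) := by
      set Bad : ℕ → Set Ω := fun k =>
        {ω | (((B.gen k ω).filter fun u => -(k : ℝ) * a ≤ B.pos u ω).card : ℝ) < ρ ^ k}
          ∩ B.survival with hBadDef
      set D : ℕ → Set Ω := fun K => ⋃ j : ℕ, Bad (K + j) with hD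
      have hDmeas : ∀ K, MeasurableSet (D K) := fun K => MeasurableSet.iUnion fun j => hBadMeas _
      have hDanti : Antitone D := by
        intro K1 K2 hK ω hω
        obtain ⟨j, hj⟩ := Set.mem_iUnion.mp hω
        refine Set.mem_iUnion.mpr ⟨K2 - K1 + j, ?_⟩
        rw [show K1 + (K2 - K1 + j) = K2 + j by omega]
        exact hj
      have hDnull : B.μ (⋂ K, D K) = 0 := by
        refine measure_mono_null ?_ (ae_iff.mp hgrow)
        intro ω hω hcon
        have hωS : ω ∈ B.survival := by
          obtain ⟨j, hj⟩ := Set.mem_iUnion.mp (Set.mem_iInter.mp hω 0)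
          exact hj.2
        obtain ⟨K, hK⟩ := Filter.eventually_atTop.mp (hcon hωS)
        obtain ⟨j, hj⟩ := Set.mem_iUnion.mp (Set.mem_iInter.mp hω K)
        exact absurd (hK (K + j) (Nat.le_add_right _ _)) (not_le.mpr hj.1)
      have hDtend := tendsto_measure_iInter_atTop (μ := B.μ)
        (fun K => (hDmeas K).nullMeasurableSet) hDanti ⟨0, measure_ne_top _ _⟩
      rw [hDnull] at hDtend
      refine tendsto_of_tendsto_of_tendsto_of_le_of_le tendsto_const_nhds hDtend
        (fun k => zero_le) (fun k => measure_mono ?_)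
      intro ω hω
      exact Set.mem_iUnion.mpr ⟨0, hω⟩
    have hBadR : Tendsto (fun k =>
        (B.μ ({ω | (((B.gen k ω).filter fun u => -(k : ℝ) * a ≤ B.pos u ω).card : ℝ) < ρ ^ k}
          ∩ B.survival)).toReal) atTop (nhds 0) := by
      have h1 := (ENNReal.tendsto_toReal (a := 0) (by simp)).comp hBadTendsto
      simp only [ENNReal.toReal_zero] at h1
      exact h1
    have hq2_0 : 0 ≤ 1 - c * (1 + 1) * Real.exp (-1) := by
      have := hcle 1 zero_le_one
      linarith
    have hq2tend : Tendsto (fun k : ℕ => (1 - c * (1 + 1) * Real.exp (-1)) ^ (ρ ^ k : ℝ))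
        atTop (nhds 0) := by
      rcases eq_or_lt_of_le hq2_0 with h0 | h0
      · have hz : ∀ k : ℕ, (1 - c * (1 + 1) * Real.exp (-1)) ^ (ρ ^ k : ℝ) = 0 := fun k => by
          rw [← h0]
          exact Real.zero_rpow (ne_of_gt (pow_pos hρ0 k))
        exact (tendsto_congr hz).mpr tendsto_const_nhds
      · have hq2lt : 1 - c * (1 + 1) * Real.exp (-1) < 1 := by
          have h1 : 0 < c * (1 + 1) * Real.exp (-1) := by positivity
          linarith
        have hre : ∀ k : ℕ, (1 - c * (1 + 1) * Real.exp (-1)) ^ (ρ ^ k : ℝ)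
            = Real.exp (Real.log (1 - c * (1 + 1) * Real.exp (-1)) * (ρ ^ k)) := fun k =>
          Real.rpow_def_of_pos h0 _
        rw [tendsto_congr hre]
        apply Real.tendsto_exp_atBot.comp
        exact (Filter.tendsto_const_mul_atBot_of_neg (Real.log_neg h0 hq2lt)).mpr
          (tendsto_pow_atTop_atTop_of_one_lt hρ)
    have hupper : ∀ᶠ k : ℕ in atTop,
        Filter.limsup (fun n : ℕ =>
          (B.μ ({ω | ∀ u ∈ B.gen n ω, B.pos u ω ≤ mshift n - ((k : ℝ) * a - 1)}
            ∩ B.survival)).toReal) Filter.atTop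
          ≤ (B.μ ({ω | (((B.gen k ω).filter fun u => -(k : ℝ) * a ≤ B.pos u ω).card : ℝ) < ρ ^ k}
              ∩ B.survival)).toReal
            + (1 - c * (1 + 1) * Real.exp (-1)) ^ (ρ ^ k : ℝ) := by
      filter_upwards [eventually_ge_atTop 1] with k hk
      refine Filter.limsup_le_of_le (Filter.isCoboundedUnder_le_of_le atTop
        fun n => ENNReal.toReal_nonneg) ?_
      filter_upwards [eventually_ge_atTop (k + 1)] with n hn
      have hm1 : 1 ≤ n - k := by omega
      have hnm : n = k + (n - k) := by omega
      have htlt : mshift (k + (n - k)) - ((k : ℝ) * a - 1) + (k : ℝ) * a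
          < mshift (n - k) + 1 := by
        have := BRWproof.mshift_strict hk hm1
        linarith
      have hsq1 : (1 : ℝ) ≤ Real.sqrt (n - k : ℕ) := by
        calc (1 : ℝ) = Real.sqrt 1 := Real.sqrt_one.symm
          _ ≤ Real.sqrt (n - k : ℕ) := Real.sqrt_le_sqrt (by exact_mod_cast hm1)
      have hfail : ∀ u : List ℕ, u.length = k →
          (B.μ (BRWproof.FailSet B u (n - k)
            (mshift (k + (n - k)) - ((k : ℝ) * a - 1) + (k : ℝ) * a))).toReal
            ≤ 1 - c * (1 + 1) * Real.exp (-1) :=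
        fun u _ => BRWproof.fail_bound B htail hm1 zero_le_one hsq1 htlt
      have hcore := BRWproof.core_est B (k := k) (m := n - k) (a := a) (ρ := ρ)
        (y := (k : ℝ) * a - 1) (q := 1 - c * (1 + 1) * Real.exp (-1))
        (t := mshift (k + (n - k)) - ((k : ℝ) * a - 1) + (k : ℝ) * a) hρ le_rfl hfail hq2_0
        (by
          have h1 : (0:ℝ) ≤ c * (1 + 1) * Real.exp (-1) := by positivity
          linarith)
      rw [hnm]
      have hsub : ({ω | ∀ u ∈ B.gen (k + (n - k)) ω,
            B.pos u ω ≤ mshift (k + (n - k)) - ((k : ℝ) * a - 1)} ∩ B.survival)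
          ⊆ (BRWproof.Aset B (k + (n - k)) ((k : ℝ) * a - 1) ∩
              {ω | ρ ^ k ≤ (((B.gen k ω).filter fun u => -(k : ℝ) * a ≤ B.pos u ω).card : ℝ)})
            ∪ ({ω | (((B.gen k ω).filter fun u => -(k : ℝ) * a ≤ B.pos u ω).card : ℝ) < ρ ^ k}
              ∩ B.survival) := by
        rintro ω ⟨hω, hωS⟩
        by_cases hG : ρ ^ k ≤ (((B.gen k ω).filter fun u => -(k : ℝ) * a ≤ B.pos u ω).card : ℝ)
        · exact Or.inl ⟨hω, hG⟩
        · exact Or.inr ⟨not_le.mp hG, hωS⟩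
      have hmu : B.μ ({ω | ∀ u ∈ B.gen (k + (n - k)) ω,
            B.pos u ω ≤ mshift (k + (n - k)) - ((k : ℝ) * a - 1)} ∩ B.survival)
          ≤ B.μ (BRWproof.Aset B (k + (n - k)) ((k : ℝ) * a - 1) ∩
              {ω | ρ ^ k ≤ (((B.gen k ω).filter fun u => -(k : ℝ) * a ≤ B.pos u ω).card : ℝ)})
            + B.μ ({ω | (((B.gen k ω).filter fun u =>
                -(k : ℝ) * a ≤ B.pos u ω).card : ℝ) < ρ ^ k} ∩ B.survival) :=
        le_trans (measure_mono hsub) (measure_union_le _ _)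
      have htr : (B.μ ({ω | ∀ u ∈ B.gen (k + (n - k)) ω,
            B.pos u ω ≤ mshift (k + (n - k)) - ((k : ℝ) * a - 1)} ∩ B.survival)).toReal
          ≤ (B.μ (BRWproof.Aset B (k + (n - k)) ((k : ℝ) * a - 1) ∩
              {ω | ρ ^ k ≤ (((B.gen k ω).filter fun u =>
                -(k : ℝ) * a ≤ B.pos u ω).card : ℝ)})).toReal
            + (B.μ ({ω | (((B.gen k ω).filter fun u =>
                -(k : ℝ) * a ≤ B.pos u ω).card : ℝ) < ρ ^ k} ∩ B.survival)).toReal := by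
        rw [← ENNReal.toReal_add (measure_ne_top _ _) (measure_ne_top _ _)]
        exact ENNReal.toReal_mono
          (ENNReal.add_ne_top.mpr ⟨measure_ne_top _ _, measure_ne_top _ _⟩) hmu
      have := hcore
      linarith
    have hlower : ∀ᶠ k : ℕ in atTop, (0 : ℝ) ≤
        Filter.limsup (fun n : ℕ =>
          (B.μ ({ω | ∀ u ∈ B.gen n ω, B.pos u ω ≤ mshift n - ((k : ℝ) * a - 1)}
            ∩ B.survival)).toReal) Filter.atTop := by
      refine Filter.Eventually.of_forall fun k => ?_
      refine Filter.le_limsup_of_frequently_le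
        (Filter.Frequently.of_forall fun n => ENNReal.toReal_nonneg) ?_
      exact Filter.isBoundedUnder_of ⟨1, fun n => BRWproof.prob_toReal_le_one B _⟩
    have hsum : Tendsto (fun k : ℕ =>
        (B.μ ({ω | (((B.gen k ω).filter fun u => -(k : ℝ) * a ≤ B.pos u ω).card : ℝ) < ρ ^ k}
          ∩ B.survival)).toReal
        + (1 - c * (1 + 1) * Real.exp (-1)) ^ (ρ ^ k : ℝ)) atTop (nhds 0) := by
      have h2 := hBadR.add hq2tend
      simp only [add_zero] at h2
      exact h2
    exact tendsto_of_tendsto_of_tendsto_of_le_of_le' tendsto_const_nhds hsum hlower hupper
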